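/- U^-_{v,t}(g) is a module over the two-parameter Kashiwara algebra B_{v,t}(g), where f_i acts by left multiplication and e_i' acts by the derivation-type operator defined by [e_i, y] = (k_i e_i''(y) - k_i' e_i'(y))/(v_i - v_i^{-1}); that is, the quantum Serre relations ∑_{p+p'=b}(-1)^p t_i^{-p(p' - 2⟨i,j⟩/(i·i) + 2⟨j,i⟩/(i·i))} e_i'^{[p]} e_j' e_i'^{[p']} = 0 hold in End(U^-) for i ≠ j, where b = 1 - 2i·j/(i·i). -/

import Mathlib

set_option synthInstance.maxHeartbeats 1000000
set_option maxHeartbeats 1000000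

/- STATEMENT 7: U^-_{v,t}(g) is a module over the two-parameter Kashiwara algebra: the
operators e_i' (acting together with left multiplication by the f_i) satisfy the quantum
Serre relations ∑_{p+p'=b} (-1)^p t_i^{-p(p'-2⟨i,j⟩/(i·i)+2⟨j,i⟩/(i·i))}
e_i'^{[p]} e_j' e_i'^{[p']} = 0 in End(U^-) for i ≠ j. -/
noncomputable section

/-- The field ℚ(t). -/
abbrev FF : Type := RatFunc ℚ
/-- The field ℚ(v,t), realized as ℚ(t)(v). -/
abbrev KK : Type := RatFunc FF
/-- The variable v. -/
def vv : KK := RatFunc.X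
/-- The variable t. -/
def tt : KK := algebraMap FF KK RatFunc.X

/-- The two-parameter quantum integer [n]_{v,t}. -/
def qnumvt (v t : KK) (n : ℕ) : KK := ((v*t)^n - ((v*t⁻¹)⁻¹)^n)/(v*t - (v*t⁻¹)⁻¹)
/-- The two-parameter quantum factorial. -/
def qfacvt (v t : KK) (n : ℕ) : KK := ∏ r ∈ Finset.Icc 1 n, qnumvt v t r

variable {I : Type} [Fintype I] [DecidableEq I]

/-- The symmetric bilinear form i·j = ⟨i,j⟩ + ⟨j,i⟩ attached to the matrix Λ = a. -/
def dotp (a : I → I → ℤ) (i j : I) : ℤ := a i j + a j i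
/-- v_i = v^{i·i/2} = v^{Λ_{ii}}. -/
def vip (a : I → I → ℤ) (i : I) : KK := vv ^ (a i i)
/-- t_i = t^{i·i/2} = t^{Λ_{ii}}. -/
def tip (a : I → I → ℤ) (i : I) : KK := tt ^ (a i i)
/-- b = 1 - 2i·j/(i·i), the length parameter in the quantum Serre relation. -/
def bserre (a : I → I → ℤ) (i j : I) : ℕ := (1 - (dotp a i j) / (a i i)).toNat

/-- The coefficient (-1)^p t_i^{-p(p' - 2⟨i,j⟩/(i·i) + 2⟨j,i⟩/(i·i))}/([p]!_{v_i,t_i}[p']!_{v_i,t_i})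
(p' = b - p) of the quantum Serre relation, with the t_i-power rewritten as an integer power
of t. -/
def serreCoeff (a : I → I → ℤ) (i j : I) (p : ℕ) : KK :=
  (-1 : KK) ^ p * tt ^ ((-(p : ℤ)) * (((bserre a i j - p : ℕ) : ℤ) * a i i - a i j + a j i)) /
    (qfacvt (vip a i) (tip a i) p * qfacvt (vip a i) (tip a i) (bserre a i j - p))

/-- The quantum Serre element ∑_{p+p'=b} (-1)^p t_i^{...} x_i^{[p]} x_j x_i^{[p']}. -/
def serreOf {A : Type*} [Ring A] [Algebra KK A] (a : I → I → ℤ) (x : I → A) (i j : I) : A :=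
  ∑ p ∈ Finset.range (bserre a i j + 1),
    serreCoeff a i j p • (x i ^ p * x j * x i ^ (bserre a i j - p))

/-- The defining relations of U^-_{v,t}(g): the quantum Serre relations among the f_i. -/
inductive SerreRel (a : I → I → ℤ) : FreeAlgebra KK I → FreeAlgebra KK I → Prop
  | serre (i j : I) (h : i ≠ j) : SerreRel a (serreOf a (FreeAlgebra.ι KK) i j) 0

/-- The negative part U^-_{v,t}(g) of the two-parameter quantum group, presented by
generators f_i and the quantum Serre relations. -/
def Uneg (a : I → I → ℤ) : Type := RingQuot (SerreRel a)

instance (a : I → I → ℤ) : Ring (Uneg a) := inferInstanceAs (Ring (RingQuot (SerreRel a)))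
instance (a : I → I → ℤ) : Algebra KK (Uneg a) :=
  inferInstanceAs (Algebra KK (RingQuot (SerreRel a)))

/-- The generator f_i of U^-. -/
def fgen (a : I → I → ℤ) (i : I) : Uneg a :=
  RingQuot.mkAlgHom KK (SerreRel a) (FreeAlgebra.ι KK i)

/-! ### Auxiliary machinery -/

section VT

lemma vv_ne_zero : vv ≠ 0 := RatFunc.X_ne_zero
lemma tt_ne_zero : tt ≠ 0 := by simp [tt, RatFunc.X_ne_zero]

lemma vv_pow_ne_one (n : ℕ) (hn : n ≠ 0) : vv ^ n ≠ 1 := by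
  intro h
  have h2 : algebraMap (Polynomial FF) KK (Polynomial.X ^ n) = algebraMap (Polynomial FF) KK 1 := by
    simpa [vv, RatFunc.algebraMap_X] using h
  have := RatFunc.algebraMap_injective FF h2
  have := congrArg Polynomial.natDegree this
  simp [Polynomial.natDegree_X_pow] at this
  exact hn this

lemma vv_zpow_ne_one (m : ℤ) (hm : m ≠ 0) : vv ^ m ≠ 1 := by
  rcases lt_trichotomy m 0 with h | h | h
  · intro he
    have h1 : vv ^ (-m) ≠ 1 := by
      have h0 : (-m).toNat ≠ 0 := by omega
      have h1 := vv_pow_ne_one (-m).toNat h0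
      rwa [← zpow_natCast, Int.toNat_of_nonneg (by omega)] at h1
    apply h1
    rw [zpow_neg, he, inv_one]
  · omega
  · have h1 := vv_pow_ne_one m.toNat (by omega)
    rwa [← zpow_natCast, Int.toNat_of_nonneg (by omega)] at h1

lemma vt_mul (x₁ y₁ x₂ y₂ : ℤ) :
    (vv ^ x₁ * tt ^ y₁) * (vv ^ x₂ * tt ^ y₂) = vv ^ (x₁ + x₂) * tt ^ (y₁ + y₂) := by
  rw [zpow_add₀ vv_ne_zero, zpow_add₀ tt_ne_zero]; ring

lemma ttmul_vt (y₁ x₂ y₂ : ℤ) :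
    tt ^ y₁ * (vv ^ x₂ * tt ^ y₂) = vv ^ x₂ * tt ^ (y₁ + y₂) := by
  rw [zpow_add₀ tt_ne_zero]; ring

lemma vt_pow (x y : ℤ) (n : ℕ) :
    (vv ^ x * tt ^ y) ^ n = vv ^ (x * n) * tt ^ (y * n) := by
  rw [mul_pow, ← zpow_natCast (vv ^ x), ← zpow_natCast (tt ^ y), ← zpow_mul, ← zpow_mul]

lemma vt_zpow (x y z : ℤ) :
    (vv ^ x * tt ^ y) ^ z = vv ^ (x * z) * tt ^ (y * z) := by
  rw [mul_zpow, ← zpow_mul, ← zpow_mul]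

lemma vt_sub_ne_zero {x x' : ℤ} (y : ℤ) (h : x ≠ x') :
    vv ^ x * tt ^ y - vv ^ x' * tt ^ y ≠ 0 := by
  intro h0
  have h1 : vv ^ x = vv ^ x' := by
    have ht : tt ^ y ≠ 0 := zpow_ne_zero _ tt_ne_zero
    have := sub_eq_zero.mp h0
    exact mul_right_cancel₀ ht this
  have h2 : vv ^ (x - x') = (1 : KK) := by
    rw [zpow_sub₀ vv_ne_zero, h1, div_self (zpow_ne_zero _ vv_ne_zero)]
  exact vv_zpow_ne_one (x - x') (by omega) h2

end VT

section Gauss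
variable {K : Type*} [Field K] (α β : K)

/-- the two-variable Gaussian integer `(α^n - β^n)/(α - β)`. -/
def gnum (n : ℕ) : K := (α ^ n - β ^ n) / (α - β)
def gfac (n : ℕ) : K := ∏ r ∈ Finset.Icc 1 n, gnum α β r

lemma gnum_zero : gnum α β 0 = 0 := by simp [gnum]
lemma gfac_succ (n : ℕ) : gfac α β (n + 1) = gfac α β n * gnum α β (n + 1) := by
  rw [gfac, gfac, ← Finset.prod_Icc_succ_top (by omega)]
lemma gnum_ne_zero_of_gfac {n k : ℕ} (h : gfac α β n ≠ 0) (h1 : 1 ≤ k) (h2 : k ≤ n) :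
    gnum α β k ≠ 0 := fun h0 => h (Finset.prod_eq_zero (Finset.mem_Icc.mpr ⟨h1, h2⟩) h0)
lemma gfac_ne_zero_of_le {n k : ℕ} (h : gfac α β n ≠ 0) (h2 : k ≤ n) : gfac α β k ≠ 0 := by
  rw [gfac, Finset.prod_ne_zero_iff]
  intro r hr
  rw [Finset.mem_Icc] at hr
  exact gnum_ne_zero_of_gfac α β h hr.1 (hr.2.trans h2)

lemma pascal (p m : ℕ) : gnum α β (p + m) = α ^ m * gnum α β p + β ^ p * gnum α β m := by
  by_cases h : α = β
  · subst h; simp [gnum]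
  · have h0 : α - β ≠ 0 := sub_ne_zero.mpr h
    rw [gnum, gnum, gnum]; field_simp; ring

lemma geom_eq_gnum (hα : α ≠ 0) (hαβ : α ≠ β) (m : ℕ) :
    ∑ r ∈ Finset.range m, (β * α⁻¹) ^ r = α ^ ((1 : ℤ) - m) * gnum α β m := by
  have h0 : α - β ≠ 0 := sub_ne_zero.mpr hαβ
  have hq : β * α⁻¹ ≠ 1 := by
    intro h
    apply hαβ
    field_simp at h
    exact h.symm
  rw [geom_sum_eq hq]
  rw [gnum, zpow_sub₀ hα, zpow_one, zpow_natCast]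
  have hm : α ^ m ≠ 0 := pow_ne_zero _ hα
  have hq0 : β * α⁻¹ - 1 ≠ 0 := sub_ne_zero.mpr hq
  have hβα : β - α ≠ 0 := fun h => hαβ (by linear_combination -h)
  have e1 : ((β * α⁻¹) ^ m - 1) = (β ^ m - α ^ m) * (α ^ m)⁻¹ := by
    rw [mul_pow, inv_pow]
    field_simp
  have e2 : (β * α⁻¹ - 1) = (β - α) * α⁻¹ := by field_simp
  rw [e1, e2]
  field_simp
  ring

lemma gauss_alt (n : ℕ) (hn : 1 ≤ n) (hfac : gfac α β n ≠ 0) :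
    ∑ p ∈ Finset.range (n + 1),
      (-1 : K) ^ p * α ^ ((n - p).choose 2) * β ^ (p.choose 2) *
        (gfac α β p * gfac α β (n - p))⁻¹ = 0 := by
  have hN : gnum α β n ≠ 0 := gnum_ne_zero_of_gfac α β hfac hn le_rfl
  set A : ℕ → K := fun p => (-1 : K) ^ p * α ^ ((n - p).choose 2) * β ^ (p.choose 2) *
      (α ^ (n - p) * gnum α β p) * (gfac α β p * gfac α β (n - p))⁻¹ with hA
  set B : ℕ → K := fun p => (-1 : K) ^ p * α ^ ((n - p).choose 2) * β ^ (p.choose 2) *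
      (β ^ p * gnum α β (n - p)) * (gfac α β p * gfac α β (n - p))⁻¹ with hB
  have key : ∀ p ∈ Finset.range (n + 1),
      ((-1 : K) ^ p * α ^ ((n - p).choose 2) * β ^ (p.choose 2) *
        (gfac α β p * gfac α β (n - p))⁻¹) * gnum α β n = A p + B p := by
    intro p hp
    rw [Finset.mem_range] at hp
    have hp' : p ≤ n := by omega
    have hpas := pascal α β p (n - p)
    rw [Nat.add_sub_cancel' hp'] at hpas
    rw [hpas, hA, hB]
    ring
  have main : ∑ p ∈ Finset.range (n + 1), (A p + B p) = 0 := by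
    rw [Finset.sum_add_distrib, Finset.sum_range_succ' A, Finset.sum_range_succ B]
    have hA0 : A 0 = 0 := by simp [hA, gnum_zero]
    have hBn : B n = 0 := by simp [hB, gnum_zero]
    rw [hA0, hBn, add_zero, add_zero, ← Finset.sum_add_distrib]
    apply Finset.sum_eq_zero
    intro p hp
    rw [Finset.mem_range] at hp
    have e1 : n - p = (n - p - 1) + 1 := by omega
    have e2 : n - (p + 1) = n - p - 1 := by omega
    have c1 : (p + 1).choose 2 = p.choose 2 + p := by
      rw [Nat.choose_succ_succ]; simp [Nat.choose_one_right, Nat.add_comm]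
    have c2 : (n - p).choose 2 = (n - p - 1).choose 2 + (n - p - 1) := by
      rw [e1, Nat.choose_succ_succ]; simp [Nat.choose_one_right, Nat.add_comm]
    have gf2 : gfac α β (n - p) = gfac α β (n - p - 1) * gnum α β (n - p) := by
      conv_lhs => rw [e1, gfac_succ]
      rw [← e1]
    have hd1 : gfac α β (p + 1) * gfac α β (n - (p + 1)) ≠ 0 :=
      mul_ne_zero (gfac_ne_zero_of_le α β hfac (by omega))
        (gfac_ne_zero_of_le α β hfac (by omega))
    have hd2 : gfac α β p * gfac α β (n - p) ≠ 0 :=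
      mul_ne_zero (gfac_ne_zero_of_le α β hfac (by omega))
        (gfac_ne_zero_of_le α β hfac (by omega))
    rw [hA, hB]
    simp only [← div_eq_mul_inv]
    rw [div_add_div _ _ hd1 hd2, div_eq_zero_iff]
    left
    rw [e2, c1, c2, gf2, gfac_succ]
    ring
  have h2 := Finset.sum_congr rfl key
  rw [← Finset.sum_mul, main] at h2
  rcases mul_eq_zero.mp h2 with h | h
  · exact h
  · exact absurd h hN

end Gauss

section Scalars

lemma qnumvt_eq_gnum (v t : KK) (n : ℕ) : qnumvt v t n = gnum (v * t) (v⁻¹ * t) n := by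
  rw [qnumvt, gnum, mul_inv_rev, inv_inv, mul_comm t v⁻¹]

lemma qfacvt_eq_gfac (v t : KK) (n : ℕ) : qfacvt v t n = gfac (v * t) (v⁻¹ * t) n := by
  rw [qfacvt, gfac]
  exact Finset.prod_congr rfl fun r _ => qnumvt_eq_gnum v t r

lemma gnum_vt_ne_zero (d : ℤ) (hd : 0 < d) (n : ℕ) (hn : 1 ≤ n) :
    gnum (vv ^ d * tt ^ d) (vv ^ (-d) * tt ^ d) n ≠ 0 := by
  rw [gnum]
  apply div_ne_zero
  · rw [vt_pow, vt_pow]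
    have hn' : (1 : ℤ) ≤ (n : ℤ) := by exact_mod_cast hn
    exact vt_sub_ne_zero _ (by nlinarith)
  · exact vt_sub_ne_zero (x := d) (x' := -d) d (by omega)

lemma gfac_vt_ne_zero (d : ℤ) (hd : 0 < d) (n : ℕ) :
    gfac (vv ^ d * tt ^ d) (vv ^ (-d) * tt ^ d) n ≠ 0 := by
  rw [gfac, Finset.prod_ne_zero_iff]
  intro r hr
  rw [Finset.mem_Icc] at hr
  exact gnum_vt_ne_zero d hd r hr.1

end Scalars
section ScalarIdentities

lemma choose_two_cast (k : ℕ) : 2 * ((k.choose 2 : ℕ) : ℤ) = (k : ℤ) * ((k : ℤ) - 1) := by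
  induction k with
  | zero => simp
  | succ m ih =>
    rw [Nat.choose_succ_succ, Nat.choose_one_right]
    push_cast
    push_cast at ih
    linear_combination ih

variable {I : Type} [Fintype I] [DecidableEq I]

lemma I2lem (a : I → I → ℤ) (i j : I)
    (hd : 0 < a i i) (hb1 : 1 ≤ bserre a i j)
    (key : ((bserre a i j : ℤ) - 1) * a i i = -(dotp a i j)) :
    ∑ p ∈ Finset.range (bserre a i j + 1),
      serreCoeff a i j p *
        (vv ^ (-(dotp a i j)) * tt ^ (a i j - a j i)) ^ (bserre a i j - p) = 0 := by
  set b := bserre a i j with hbdef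
  set αv : KK := vv ^ (a i i) * tt ^ (a i i) with hαv
  set βv : KK := vv ^ (-(a i i)) * tt ^ (a i i) with hβv
  rw [dotp] at key
  have h1 : vip a i * tip a i = αv := by rw [hαv, vip, tip]
  have h2 : (vip a i)⁻¹ * tip a i = βv := by rw [hβv, vip, tip, zpow_neg]
  have hqfac : ∀ n, qfacvt (vip a i) (tip a i) n = gfac αv βv n := by
    intro n
    rw [qfacvt_eq_gfac, h1, h2]
  have hfac : ∀ n, gfac αv βv n ≠ 0 := by
    intro n
    rw [hαv, hβv]
    exact gfac_vt_ne_zero (a i i) hd n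
  have gaus := gauss_alt αv βv b hb1 (hfac b)
  set C : KK := tt ^ ((b : ℤ) * (a i j - a j i)) * βv ^ (-(b.choose 2 : ℤ)) with hC
  have per : ∀ p ∈ Finset.range (b + 1),
      serreCoeff a i j p * (vv ^ (-(dotp a i j)) * tt ^ (a i j - a j i)) ^ (b - p) =
        C * ((-1 : KK) ^ p * αv ^ ((b - p).choose 2) * βv ^ (p.choose 2) *
          (gfac αv βv p * gfac αv βv (b - p))⁻¹) := by
    intro p hp
    rw [Finset.mem_range] at hp
    have cc1 : ((b - p : ℕ) : ℤ) = (b : ℤ) - p := by omega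
    have z1c := choose_two_cast (b - p)
    have z2c := choose_two_cast p
    have z3c := choose_two_cast b
    rw [cc1] at z1c
    have M2 : tt ^ ((-(p : ℤ)) * (((b - p : ℕ) : ℤ) * a i i - a i j + a j i)) *
        (vv ^ (-(dotp a i j)) * tt ^ (a i j - a j i)) ^ (b - p) =
        C * (αv ^ ((b - p).choose 2) * βv ^ (p.choose 2)) := by
      rw [hC, hαv, hβv, dotp]
      simp only [vt_pow, vt_zpow, vt_mul, ttmul_vt]
      congr 1
      · congr 1
        -- vv exponent
        have h2' : 2 * ((-(a i j + a j i)) * ((b - p : ℕ) : ℤ)) =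
            2 * ((-(a i i)) * (-(b.choose 2 : ℤ)) +
              (a i i * ((b - p).choose 2 : ℤ) + (-(a i i)) * (p.choose 2 : ℤ))) := by
          rw [cc1]
          linear_combination (-2 * ((b : ℤ) - p)) * key - (a i i) * z3c - (a i i) * z1c +
            (a i i) * z2c
        linarith
      · congr 1
        -- tt exponent
        have h2' : 2 * ((-(p : ℤ)) * (((b - p : ℕ) : ℤ) * a i i - a i j + a j i) +
              (a i j - a j i) * ((b - p : ℕ) : ℤ)) =
            2 * ((b : ℤ) * (a i j - a j i) + a i i * (-(b.choose 2 : ℤ)) +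
              (a i i * ((b - p).choose 2 : ℤ) + a i i * (p.choose 2 : ℤ))) := by
          rw [cc1]
          linear_combination -(a i i) * z1c - (a i i) * z2c + (a i i) * z3c
        linarith
    rw [serreCoeff, ← hbdef, hqfac, hqfac, div_eq_mul_inv]
    linear_combination ((-1 : KK) ^ p * (gfac αv βv p * gfac αv βv (b - p))⁻¹) * M2
  rw [Finset.sum_congr rfl per, ← Finset.mul_sum, gaus, mul_zero]

lemma I3lem (a : I → I → ℤ) (i j : I)
    (hd : 0 < a i i) (hb1 : 1 ≤ bserre a i j)
    (key : ((bserre a i j : ℤ) - 1) * a i i = -(dotp a i j))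
    (p : ℕ) (hp : p < bserre a i j) :
    serreCoeff a i j (p + 1) *
      ((vv ^ (-(dotp a i i)) * tt ^ (a i i - a i i)) ^ (bserre a i j - p - 1) *
        ((vv ^ (-(dotp a j i)) * tt ^ (a j i - a i j)) *
          ∑ r ∈ Finset.range (p + 1), (vv ^ (-(dotp a i i)) * tt ^ (a i i - a i i)) ^ r)) +
    serreCoeff a i j p *
      ∑ r ∈ Finset.range (bserre a i j - p),
        (vv ^ (-(dotp a i i)) * tt ^ (a i i - a i i)) ^ r = 0 := by
  set b := bserre a i j with hbdef
  set αv : KK := vv ^ (a i i) * tt ^ (a i i) with hαv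
  set βv : KK := vv ^ (-(a i i)) * tt ^ (a i i) with hβv
  rw [dotp] at key
  have h1 : vip a i * tip a i = αv := by rw [hαv, vip, tip]
  have h2 : (vip a i)⁻¹ * tip a i = βv := by rw [hβv, vip, tip, zpow_neg]
  have hqfac : ∀ n, qfacvt (vip a i) (tip a i) n = gfac αv βv n := by
    intro n
    rw [qfacvt_eq_gfac, h1, h2]
  have hfac : ∀ n, gfac αv βv n ≠ 0 := by
    intro n
    rw [hαv, hβv]
    exact gfac_vt_ne_zero (a i i) hd n
  have hα0 : αv ≠ 0 := by
    rw [hαv]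
    exact mul_ne_zero (zpow_ne_zero _ vv_ne_zero) (zpow_ne_zero _ tt_ne_zero)
  have hαβ : αv ≠ βv := by
    rw [hαv, hβv]
    exact sub_ne_zero.mp (vt_sub_ne_zero _ (by omega))
  have hQii : vv ^ (-(dotp a i i)) * tt ^ (a i i - a i i) = βv * αv⁻¹ := by
    rw [hαv, hβv, dotp, mul_inv, ← zpow_neg vv, ← zpow_neg tt, vt_mul]
    congr 2 <;> ring
  have hgam : ∀ m : ℕ, (∑ r ∈ Finset.range m,
      (vv ^ (-(dotp a i i)) * tt ^ (a i i - a i i)) ^ r) = αv ^ ((1 : ℤ) - m) * gnum αv βv m := by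
    intro m
    rw [hQii]
    exact geom_eq_gnum αv βv hα0 hαβ m
  rw [hgam, hgam]
  have cc1 : ((b - p : ℕ) : ℤ) = (b : ℤ) - p := by omega
  have cc2 : ((b - (p + 1) : ℕ) : ℤ) = (b : ℤ) - p - 1 := by omega
  have cc3 : ((b - p - 1 : ℕ) : ℤ) = (b : ℤ) - p - 1 := by omega
  have hgp : gnum αv βv (p + 1) ≠ 0 := gnum_ne_zero_of_gfac αv βv (hfac b) (by omega) (by omega)
  have hgn : gnum αv βv (b - p) ≠ 0 := gnum_ne_zero_of_gfac αv βv (hfac b) (by omega) (by omega)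
  have gf1 : gfac αv βv (p + 1) = gfac αv βv p * gnum αv βv (p + 1) := gfac_succ αv βv p
  have gf2 : gfac αv βv (b - p) = gfac αv βv (b - p - 1) * gnum αv βv (b - p) := by
    have e1 : b - p = (b - p - 1) + 1 := by omega
    conv_lhs => rw [e1, gfac_succ]
    rw [← e1]
  have M3 : tt ^ ((-((p + 1 : ℕ) : ℤ)) * (((b - (p + 1) : ℕ) : ℤ) * a i i - a i j + a j i)) *
      ((vv ^ (-(dotp a i i)) * tt ^ (a i i - a i i)) ^ (b - p - 1) *
        ((vv ^ (-(dotp a j i)) * tt ^ (a j i - a i j)) * αv ^ ((1 : ℤ) - ((p + 1 : ℕ) : ℤ)))) =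
      tt ^ ((-(p : ℤ)) * (((b - p : ℕ) : ℤ) * a i i - a i j + a j i)) *
        αv ^ ((1 : ℤ) - ((b - p : ℕ) : ℤ)) := by
    rw [hαv, dotp, dotp]
    simp only [vt_pow, vt_zpow, vt_mul, ttmul_vt]
    congr 1
    · congr 1
      simp only [cc1, cc2, cc3]
      push_cast
      linear_combination -key
    · congr 1
      simp only [cc1, cc2, cc3]
      push_cast
      ring
  have hD1 : gfac αv βv (p + 1) * gfac αv βv (b - (p + 1)) ≠ 0 :=
    mul_ne_zero (hfac _) (hfac _)
  have hD2 : gfac αv βv p * gfac αv βv (b - p) ≠ 0 :=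
    mul_ne_zero (hfac _) (hfac _)
  rw [serreCoeff, serreCoeff, ← hbdef, hqfac, hqfac, hqfac, hqfac,
    div_mul_eq_mul_div, div_mul_eq_mul_div, div_add_div _ _ hD1 hD2, div_eq_zero_iff]
  left
  rw [show b - (p + 1) = b - p - 1 from by omega] at *
  rw [gf1, gf2]
  have hsign : ((-1 : KK)) ^ (p + 1) = -(-1 : KK) ^ p := by rw [pow_succ]; ring
  rw [hsign]
  linear_combination (-((-1 : KK) ^ p) * gfac αv βv p * gfac αv βv (b - p - 1) *
    gnum αv βv (p + 1) * gnum αv βv (b - p)) * M3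

end ScalarIdentities
theorem serre_relations_for_eprime (a : I → I → ℤ)
    (hpos : ∀ i, 0 < a i i) (hneg : ∀ i j, i ≠ j → a i j ≤ 0)
    (hdvd : ∀ i j, a i i ∣ (a i j + a j i))
    (e' : I → Module.End KK (Uneg a))
    (he'one : ∀ i, e' i 1 = 0)
    (he'f : ∀ i j y, e' i (fgen a j * y) =
      (if i = j then y else 0) +
        (vv ^ (-(dotp a i j)) * tt ^ (a i j - a j i)) • (fgen a j * e' i y)) :
    ∀ i j, i ≠ j → serreOf a e' i j = (0 : Module.End KK (Uneg a)) := by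
  intro i j hij
  have hd : 0 < a i i := hpos i
  obtain ⟨c, hc⟩ := hdvd i j
  have hc0 : c ≤ 0 := by
    have h1 : a i j ≤ 0 := hneg i j hij
    have h2 : a j i ≤ 0 := hneg j i (Ne.symm hij)
    nlinarith
  have hbz : (bserre a i j : ℤ) = 1 - c := by
    rw [bserre, dotp, hc, Int.mul_ediv_cancel_left _ (by omega)]
    omega
  have hb1 : 1 ≤ bserre a i j := by omega
  have key : ((bserre a i j : ℤ) - 1) * a i i = -(dotp a i j) := by
    rw [hbz, dotp, hc]; ring
  set b := bserre a i j with hbdef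
  set Qf : I → I → KK := fun k l => vv ^ (-(dotp a k l)) * tt ^ (a k l - a l k) with hQf
  have hef : ∀ (k l : I) (y : Uneg a), e' k (fgen a l * y) =
      (if k = l then y else 0) + Qf k l • (fgen a l * e' k y) := he'f
  -- scalar identities (proved separately below)
  have I2 : ∑ p ∈ Finset.range (b + 1), serreCoeff a i j p * Qf i j ^ (b - p) = 0 := by
    simp only [hQf]
    exact I2lem a i j hd hb1 key
  have I3 : ∀ p, p < b →
      serreCoeff a i j (p + 1) * (Qf i i ^ (b - p - 1) *
        (Qf j i * ∑ r ∈ Finset.range (p + 1), Qf i i ^ r)) +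
      serreCoeff a i j p * ∑ r ∈ Finset.range (b - p), Qf i i ^ r = 0 := by
    intro p hp
    simp only [hQf]
    exact I3lem a i j hd hb1 key p hp
  -- iterated commutation of `e' i` past `fgen a k`, `k ≠ i`
  have powE_ne : ∀ (k : I), i ≠ k → ∀ (n : ℕ) (y : Uneg a),
      (e' i ^ n) (fgen a k * y) = (Qf i k ^ n) • (fgen a k * (e' i ^ n) y) := by
    intro k hik n
    induction n with
    | zero => intro y; simp
    | succ m ih =>
      intro y
      rw [pow_succ, Module.End.mul_apply, hef, if_neg hik, zero_add, map_smul, ih, smul_smul,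
        ← Module.End.mul_apply (e' i ^ m) (e' i), ← pow_succ, ← pow_succ']
  -- iterated commutation of `e' i` past `fgen a i`
  have powE_eq : ∀ (n : ℕ) (y : Uneg a),
      (e' i ^ n) (fgen a i * y) = (Qf i i ^ n) • (fgen a i * (e' i ^ n) y) +
        (∑ r ∈ Finset.range n, Qf i i ^ r) • ((e' i ^ (n - 1)) y) := by
    intro n
    induction n with
    | zero => intro y; simp
    | succ m ih =>
      intro y
      rcases Nat.eq_zero_or_pos m with hm | hm
      · subst hm
        rw [pow_one, hef, if_pos rfl]
        simp [add_comm]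
      · have hm1 : m - 1 + 1 = m := by omega
        rw [pow_succ, Module.End.mul_apply, hef, if_pos rfl, map_add, map_smul, ih,
          smul_add, smul_smul, smul_smul,
          ← Module.End.mul_apply (e' i ^ m) (e' i), ← pow_succ,
          ← Module.End.mul_apply (e' i ^ (m - 1)) (e' i), ← pow_succ, hm1, ← pow_succ']
        rw [show m + 1 - 1 = m from rfl, geom_sum_succ, add_smul, one_smul]
        abel
  have happ : ∀ u : Uneg a, serreOf a e' i j u =
      ∑ p ∈ Finset.range (b + 1),
        serreCoeff a i j p • ((e' i ^ p) ((e' j) ((e' i ^ (b - p)) u))) := by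
    intro u
    simp only [serreOf, LinearMap.sum_apply, LinearMap.smul_apply, Module.End.mul_apply, hbdef]
  have hEFE1 : ∀ (m p : ℕ), (e' i ^ p) ((e' j) ((e' i ^ m) (1 : Uneg a))) = 0 := by
    intro m p
    rcases m with _ | m'
    · rw [pow_zero, Module.End.one_apply, he'one j, map_zero]
    · rw [pow_succ, Module.End.mul_apply, he'one i, map_zero, map_zero, map_zero]
  have hS1 : serreOf a e' i j 1 = 0 := by
    rw [happ]
    apply Finset.sum_eq_zero
    intro p _
    rw [hEFE1, smul_zero]
  have hSmul : ∀ (k : I) (y : Uneg a),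
      serreOf a e' i j (fgen a k * y) =
        (Qf i k ^ b * Qf j k) • (fgen a k * serreOf a e' i j y) := by
    intro k y
    by_cases hik : i = k
    · -- k = i
      subst hik
      rw [happ (fgen a i * y)]
      have per : ∀ p ∈ Finset.range (b + 1),
          serreCoeff a i j p • ((e' i ^ p) ((e' j) ((e' i ^ (b - p)) (fgen a i * y)))) =
            ((Qf i i ^ b * Qf j i) * serreCoeff a i j p) •
                (fgen a i * (e' i ^ p) ((e' j) ((e' i ^ (b - p)) y))) +
            (serreCoeff a i j p * (Qf i i ^ (b - p) * (Qf j i *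
                ∑ r ∈ Finset.range p, Qf i i ^ r))) •
                ((e' i ^ (p - 1)) ((e' j) ((e' i ^ (b - p)) y))) +
            (serreCoeff a i j p * ∑ r ∈ Finset.range (b - p), Qf i i ^ r) •
                ((e' i ^ p) ((e' j) ((e' i ^ (b - p - 1)) y))) := by
        intro p hp
        rw [Finset.mem_range] at hp
        rw [powE_eq (b - p) y, map_add, map_smul, map_smul, hef j i,
          if_neg (Ne.symm hij), zero_add, map_add, map_smul, map_smul, map_smul,
          powE_eq p]
        simp only [smul_add, smul_smul]
        congr 1
        congr 1
        congr 1
        have hpow : Qf i i ^ (b - p) * Qf i i ^ p = Qf i i ^ b := by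
          rw [← pow_add]; congr 1; omega
        linear_combination (serreCoeff a i j p * Qf j i) * hpow
      rw [Finset.sum_congr rfl per, Finset.sum_add_distrib, Finset.sum_add_distrib]
      have hfirst : ∑ p ∈ Finset.range (b + 1), ((Qf i i ^ b * Qf j i) * serreCoeff a i j p) •
          (fgen a i * (e' i ^ p) ((e' j) ((e' i ^ (b - p)) y))) =
          (Qf i i ^ b * Qf j i) • (fgen a i * serreOf a e' i j y) := by
        rw [happ y, Finset.mul_sum, Finset.smul_sum]
        apply Finset.sum_congr rfl
        intro p _
        rw [mul_smul_comm, smul_smul]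
      rw [hfirst, Finset.sum_range_succ', Finset.sum_range_succ]
      have hg0 : (serreCoeff a i j 0 * (Qf i i ^ (b - 0) * (Qf j i *
          ∑ r ∈ Finset.range 0, Qf i i ^ r))) •
          ((e' i ^ (0 - 1)) ((e' j) ((e' i ^ (b - 0)) y))) = 0 := by
        simp
      have hgb : (serreCoeff a i j b * ∑ r ∈ Finset.range (b - b), Qf i i ^ r) •
          ((e' i ^ b) ((e' j) ((e' i ^ (b - b - 1)) y))) = 0 := by
        simp [Nat.sub_self]
      rw [hg0, hgb, add_zero, add_zero, add_assoc, ← Finset.sum_add_distrib]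
      have hzero : ∑ p ∈ Finset.range b,
          ((serreCoeff a i j (p + 1) * (Qf i i ^ (b - (p + 1)) * (Qf j i *
              ∑ r ∈ Finset.range (p + 1), Qf i i ^ r))) •
              ((e' i ^ (p + 1 - 1)) ((e' j) ((e' i ^ (b - (p + 1))) y))) +
           (serreCoeff a i j p * ∑ r ∈ Finset.range (b - p), Qf i i ^ r) •
              ((e' i ^ p) ((e' j) ((e' i ^ (b - p - 1)) y)))) = 0 := by
        apply Finset.sum_eq_zero
        intro p hp
        rw [Finset.mem_range] at hp
        rw [show b - (p + 1) = b - p - 1 from by omega, show p + 1 - 1 = p from rfl,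
          ← add_smul, I3 p hp, zero_smul]
      rw [hzero, add_zero]
    · by_cases hjk : j = k
      · -- k = j
        subst hjk
        rw [happ (fgen a j * y)]
        have per : ∀ p ∈ Finset.range (b + 1),
            serreCoeff a i j p • ((e' i ^ p) ((e' j) ((e' i ^ (b - p)) (fgen a j * y)))) =
              (serreCoeff a i j p * Qf i j ^ (b - p)) • ((e' i ^ b) y) +
              ((Qf i j ^ b * Qf j j) * serreCoeff a i j p) •
                (fgen a j * (e' i ^ p) ((e' j) ((e' i ^ (b - p)) y))) := by
          intro p hp
          rw [Finset.mem_range] at hp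
          rw [powE_ne j hij, map_smul, hef j j, if_pos rfl, map_smul, map_add, map_smul,
            powE_ne j hij, ← Module.End.mul_apply (e' i ^ p) (e' i ^ (b - p)), ← pow_add,
            show p + (b - p) = b from by omega]
          simp only [smul_add, smul_smul]
          congr 1
          congr 1
          have hpow : Qf i j ^ (b - p) * Qf i j ^ p = Qf i j ^ b := by
            rw [← pow_add]; congr 1; omega
          linear_combination (serreCoeff a i j p * Qf j j) * hpow
        rw [Finset.sum_congr rfl per, Finset.sum_add_distrib, ← Finset.sum_smul, I2, zero_smul,
          zero_add, happ y, Finset.mul_sum, Finset.smul_sum]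
        apply Finset.sum_congr rfl
        intro p _
        rw [mul_smul_comm, smul_smul]
      · -- generic k
        rw [happ (fgen a k * y), happ y, Finset.mul_sum, Finset.smul_sum]
        apply Finset.sum_congr rfl
        intro p hp
        rw [Finset.mem_range] at hp
        rw [powE_ne k hik, map_smul, hef j k, if_neg hjk, zero_add, map_smul, map_smul,
          powE_ne k hik]
        simp only [smul_smul, mul_smul_comm]
        congr 1
        have hpow : Qf i k ^ (b - p) * Qf i k ^ p = Qf i k ^ b := by
          rw [← pow_add]; congr 1; omega
        linear_combination (serreCoeff a i j p * Qf j k) * hpow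
  -- now conclude
  have hall : ∀ u : Uneg a, serreOf a e' i j u = 0 := by
    let π : FreeAlgebra KK I →ₐ[KK] Uneg a := RingQuot.mkAlgHom KK (SerreRel a)
    have claim : ∀ z : FreeAlgebra KK I, ∀ w : Uneg a, serreOf a e' i j w = 0 →
        serreOf a e' i j (π z * w) = 0 := by
      intro z
      induction z using FreeAlgebra.induction with
      | grade0 r =>
        intro w hw
        rw [π.commutes r, ← Algebra.smul_def, map_smul, hw, smul_zero]
      | grade1 x =>
        intro w hw
        have hx : π (FreeAlgebra.ι KK x) = fgen a x := rfl
        rw [hx, hSmul, hw, mul_zero, smul_zero]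
      | mul z₁ z₂ ih₁ ih₂ =>
        intro w hw
        rw [map_mul π z₁ z₂, mul_assoc]
        exact ih₁ _ (ih₂ w hw)
      | add z₁ z₂ ih₁ ih₂ =>
        intro w hw
        rw [map_add π z₁ z₂, add_mul, map_add, ih₁ w hw, ih₂ w hw, add_zero]
    intro u
    have hsurj : Function.Surjective π := RingQuot.mkAlgHom_surjective KK (SerreRel a)
    obtain ⟨z, rfl⟩ := hsurj u
    rw [← mul_one (π z)]
    exact claim z 1 hS1
  exact LinearMap.ext hall
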